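/- arXiv:1902.00766 — 5 statements merged into one kernel-verified Lean document; each statement's English description precedes it below -/
import Mathlib

section
/- If all components of r are the negative essential infimum, r_i(ξ) = −ess inf ξ, then for any essentially bounded random lower closed set X, the selection risk measure ρ_s(X) equals the set of fixed points of −X, that is, ρ_s(X) = {x : P(−x ∈ X) = 1} = −F_X. -/
open MeasureTheory Pointwise Filter
open scoped ENNReal NNReal

noncomputable section

variable {Ω : Type*}

/-- The family of `p`-integrable selections of a random set `X`. -/
def Sel [MeasurableSpace Ω] (μ : Measure Ω) (p : ℝ≥0∞) {d : ℕ}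
    (X : Ω → Set (Fin d → ℝ)) : Set (Ω → Fin d → ℝ) :=
  {ξ | MemLp ξ p μ ∧ ∀ᵐ ω ∂μ, ξ ω ∈ X ω}

/-- The selection risk measure `ρ_s(X) = cl ⋃_{ξ ∈ L^p(X)} (r(ξ) + ℝ_+^d)`. -/
def selRisk [MeasurableSpace Ω] (μ : Measure Ω) (p : ℝ≥0∞) {d : ℕ}
    (r : Fin d → (Ω → ℝ) → ℝ) (X : Ω → Set (Fin d → ℝ)) : Set (Fin d → ℝ) :=
  closure (⋃ ξ ∈ Sel μ p X, {x | ∀ i, r i (fun ω => ξ ω i) ≤ x i})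

theorem stmt7 [MeasurableSpace Ω] (μ : Measure Ω) [IsProbabilityMeasure μ] {d : ℕ}
    (X : Ω → Set (Fin d → ℝ))
    (hXc : ∀ ω, IsClosed (X ω) ∧ IsLowerSet (X ω))
    (hXi : (Sel μ ∞ X).Nonempty) :
    selRisk μ ∞ (fun _ ξ => -(essInf ξ μ)) X = -{x : Fin d → ℝ | ∀ᵐ ω ∂μ, x ∈ X ω} := by
  have hF : IsClosed {x : Fin d → ℝ | ∀ᵐ ω ∂μ, x ∈ X ω} := by
    apply IsSeqClosed.isClosed
    intro u x hu hux
    have h : ∀ᵐ ω ∂μ, ∀ n, u n ∈ X ω := ae_all_iff.mpr hu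
    filter_upwards [h] with ω hω
    exact (hXc ω).1.mem_of_tendsto hux (Eventually.of_forall hω)
  apply Set.Subset.antisymm
  · refine closure_minimal ?_ hF.neg
    rintro x hx
    simp only [Set.mem_iUnion] at hx
    obtain ⟨ξ, ⟨hξp, hξmem⟩, hxle⟩ := hx
    rw [Set.mem_neg]
    -- ξ is essentially bounded
    have hfin : eLpNormEssSup ξ μ < ⊤ := by
      have := hξp.2
      rwa [eLpNorm_exponent_top] at this
    set C : ℝ≥0 := (eLpNormEssSup ξ μ).toNNReal with hC
    have hbd : ∀ᵐ ω ∂μ, ‖ξ ω‖₊ ≤ C := by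
      filter_upwards [ae_le_eLpNormEssSup (f := ξ) (μ := μ)] with ω hω
      rw [← ENNReal.coe_le_coe, hC, ENNReal.coe_toNNReal hfin.ne]
      exact hω
    have hinf : ∀ i, ∀ᵐ ω ∂μ, essInf (fun ω => ξ ω i) μ ≤ ξ ω i := by
      intro i
      apply ae_essInf_le
      refine ⟨-(C : ℝ), ?_⟩
      rw [eventually_map]
      filter_upwards [hbd] with ω hω
      have h1 : |ξ ω i| ≤ ‖ξ ω‖ := by
        simpa using norm_le_pi_norm (ξ ω) i
      have h2 : ‖ξ ω‖ ≤ (C : ℝ) := hω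
      have := (abs_le.mp (h1.trans h2)).1
      linarith
    have hall : ∀ᵐ ω ∂μ, ∀ i, essInf (fun ω => ξ ω i) μ ≤ ξ ω i := ae_all_iff.mpr hinf
    filter_upwards [hall, hξmem] with ω hω hmem
    refine (hXc ω).2 ?_ hmem
    intro i
    have := hxle i
    have := hω i
    simp only [Pi.neg_apply]
    linarith
  · rintro y hy
    rw [Set.mem_neg] at hy
    apply subset_closure
    simp only [Set.mem_iUnion]
    refine ⟨fun _ => -y, ⟨memLp_const _, hy⟩, fun i => ?_⟩
    have : essInf (fun _ : Ω => (-y) i) μ = (-y) i := essInf_const' _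
    simp [this]
end
end

section
/- Let Ω = {ω_1,...,ω_n} be a finite probability space with all atoms of probability at least α, and let all components of r be the Average Value-at-Risk at level α. Then for any random lower closed set X in R^d one has ρ_s(X) = −F_X = −∩_{i=1}^n X(ω_i). -/
open MeasureTheory Pointwise Filter
open scoped ENNReal NNReal

noncomputable section

variable {Ω : Type*}

/-- The (left-continuous) quantile function `F_ξ^{-1}(t) = inf {x : F_ξ(x) ≥ t}`. -/
def qtl [MeasurableSpace Ω] (μ : Measure Ω) (ξ : Ω → ℝ) (t : ℝ) : ℝ :=
  sInf {x | t ≤ (μ {ω | ξ ω ≤ x}).toReal}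

/-- The Average Value-at-Risk at level `α`. -/
def avar [MeasurableSpace Ω] (μ : Measure Ω) (α : ℝ) (ξ : Ω → ℝ) : ℝ :=
  -((1 / α) * ∫ t in (0:ℝ)..α, qtl μ ξ t)

lemma ae_all_of_atoms [MeasurableSpace Ω] (μ : Measure Ω) {α : ℝ} (hα0 : 0 < α)
    (hatom : ∀ ω : Ω, α ≤ (μ {ω}).toReal)
    {P : Ω → Prop} (h : ∀ᵐ ω ∂μ, P ω) : ∀ ω, P ω := by
  intro ω
  by_contra hP
  have h0 : μ {ω' | ¬ P ω'} = 0 := h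
  have hle : μ {ω} ≤ μ {ω' | ¬ P ω'} := measure_mono (by simpa using hP)
  have hz : μ {ω} = 0 := le_antisymm (hle.trans h0.le) zero_le
  have := hatom ω
  rw [hz] at this; simp at this; linarith

lemma avar_eq_neg_min [MeasurableSpace Ω] (μ : Measure Ω) [IsFiniteMeasure μ]
    {α : ℝ} (hα0 : 0 < α)
    (hatom : ∀ ω : Ω, α ≤ (μ {ω}).toReal) (ξ : Ω → ℝ) {ω₀ : Ω}
    (hmin : ∀ ω, ξ ω₀ ≤ ξ ω) : avar μ α ξ = -(ξ ω₀) := by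
  have hq : ∀ t ∈ Set.Ioc (0:ℝ) α, qtl μ ξ t = ξ ω₀ := by
    intro t ht
    have hset : {x : ℝ | t ≤ (μ {ω | ξ ω ≤ x}).toReal} = Set.Ici (ξ ω₀) := by
      ext x
      simp only [Set.mem_setOf_eq, Set.mem_Ici]
      constructor
      · intro hx
        by_contra hlt
        push_neg at hlt
        have hempty : {ω | ξ ω ≤ x} = ∅ := by
          ext ω
          simp only [Set.mem_setOf_eq, Set.mem_empty_iff_false, iff_false]
          exact fun h => absurd (le_trans (hmin ω) h) (not_le.mpr hlt)
        rw [hempty] at hx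
        simp at hx
        linarith [ht.1]
      · intro hx
        have hsub : ({ω₀} : Set Ω) ⊆ {ω | ξ ω ≤ x} := by
          intro ω hω
          simp only [Set.mem_singleton_iff] at hω
          subst hω
          exact hx
        have hm : μ {ω₀} ≤ μ {ω | ξ ω ≤ x} := measure_mono hsub
        have hfin : μ {ω | ξ ω ≤ x} ≠ ⊤ := measure_ne_top μ _
        calc t ≤ α := ht.2
          _ ≤ (μ {ω₀}).toReal := hatom ω₀
          _ ≤ (μ {ω | ξ ω ≤ x}).toReal := ENNReal.toReal_mono hfin hm
    rw [qtl, hset, csInf_Ici]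
  have hint : ∫ t in (0:ℝ)..α, qtl μ ξ t = ∫ t in (0:ℝ)..α, (ξ ω₀) := by
    apply intervalIntegral.integral_congr_ae
    filter_upwards with t ht
    rw [Set.uIoc_of_le hα0.le] at ht
    exact hq t ht
  rw [avar, hint, intervalIntegral.integral_const, smul_eq_mul]
  field_simp
  ring

theorem stmt8 [Fintype Ω] [MeasurableSpace Ω] [MeasurableSingletonClass Ω]
    (μ : Measure Ω) [IsProbabilityMeasure μ] {d : ℕ}
    (α : ℝ) (hα0 : 0 < α) (hα1 : α ≤ 1)
    (hatom : ∀ ω : Ω, α ≤ (μ {ω}).toReal)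
    (X : Ω → Set (Fin d → ℝ))
    (hXc : ∀ ω, IsClosed (X ω) ∧ IsLowerSet (X ω))
    (hXi : (Sel μ 1 X).Nonempty) :
    selRisk μ 1 (fun _ => avar μ α) X = -⋂ ω : Ω, X ω := by
  have hne : Nonempty Ω := by
    by_contra h
    rw [not_nonempty_iff] at h
    have h1 : (μ Set.univ) = 1 := measure_univ
    rw [Set.univ_eq_empty_iff.mpr h, measure_empty] at h1
    exact zero_ne_one h1
  apply subset_antisymm
  · have hclosed : IsClosed (-⋂ ω : Ω, X ω) :=
      (isClosed_iInter fun ω => (hXc ω).1).neg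
    rw [selRisk]
    refine closure_minimal ?_ hclosed
    rintro x hx
    simp only [Set.mem_iUnion, Set.mem_setOf_eq] at hx
    obtain ⟨ξ, hξ, hx⟩ := hx
    have hsel : ∀ ω, ξ ω ∈ X ω := ae_all_of_atoms μ hα0 hatom hξ.2
    rw [Set.mem_neg, Set.mem_iInter]
    intro ω
    apply (hXc ω).2 _ (hsel ω)
    intro i
    obtain ⟨ω₀, hω₀⟩ := Finite.exists_min (fun ω => ξ ω i)
    have h1 := hx i
    rw [avar_eq_neg_min μ hα0 hatom _ hω₀] at h1
    have := hω₀ ω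
    simp only [Pi.neg_apply]
    linarith
  · intro x hx
    rw [Set.mem_neg, Set.mem_iInter] at hx
    apply subset_closure
    refine Set.mem_iUnion.mpr ⟨fun _ => -x, Set.mem_iUnion.mpr
      ⟨⟨memLp_const _, Filter.Eventually.of_forall fun ω => hx ω⟩, ?_⟩⟩
    intro i
    show avar μ α (fun _ : Ω => -x i) ≤ x i
    rw [avar_eq_neg_min μ hα0 hatom _
      (ω₀ := Classical.arbitrary Ω) (fun ω => le_refl (-x i))]
    simp
end
end

section
/- Let C be a p-integrable random vector in R^d, κ > 0, I_κ = R_−^d ∪ H_{−κ} with H_t = {x ∈ R^d : Σ x_i ≤ t}. Then (r(C) − I_κ) ∪ ρ_s(C + H_{−κ}) ⊆ ρ_s(C + I_κ) ⊆ ρ_s(C + H_0). -/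
open MeasureTheory Pointwise Filter
open scoped ENNReal NNReal

noncomputable section

variable {Ω : Type*}

/-- The half-space `H_t = {x : Σ_i x_i ≤ t}`. -/
def Hset (d : ℕ) (t : ℝ) : Set (Fin d → ℝ) := {x | ∑ i, x i ≤ t}

/-- The set `I_κ = ℝ_-^d ∪ H_{-κ}` of transfers with fixed transaction cost `κ`. -/
def Iset (d : ℕ) (κ : ℝ) : Set (Fin d → ℝ) := {x | x ≤ 0} ∪ Hset d (-κ)


theorem selRisk_mono [MeasurableSpace Ω] (μ : Measure Ω) (p : ℝ≥0∞) {d : ℕ}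
    (r : Fin d → (Ω → ℝ) → ℝ) {X Y : Ω → Set (Fin d → ℝ)} (h : ∀ ω, X ω ⊆ Y ω) :
    selRisk μ p r X ⊆ selRisk μ p r Y := by
  apply closure_mono
  refine Set.iUnion₂_subset fun ξ hξ x hx => ?_
  exact Set.mem_iUnion₂.2 ⟨ξ, ⟨hξ.1, hξ.2.mono fun ω hω => h ω hω⟩, hx⟩

theorem stmt13 [MeasurableSpace Ω] (μ : Measure Ω) [IsProbabilityMeasure μ] (p : ℝ≥0∞) {d : ℕ}
    (r : Fin d → (Ω → ℝ) → ℝ)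
    (hmono : ∀ i (ξ η : Ω → ℝ), (∀ᵐ ω ∂μ, ξ ω ≤ η ω) → r i η ≤ r i ξ)
    (hcash : ∀ i (ξ : Ω → ℝ) (c : ℝ), r i (fun ω => ξ ω + c) = r i ξ - c)
    (hzero : ∀ i, r i (fun _ => 0) = 0)
    (C : Ω → Fin d → ℝ) (hC : MemLp C p μ)
    (κ : ℝ) (hκ : 0 < κ) :
    ((fun x => (fun i => r i (fun ω => C ω i)) - x) '' Iset d κ) ∪
        selRisk μ p r (fun ω => (fun x => C ω + x) '' Hset d (-κ)) ⊆
      selRisk μ p r (fun ω => (fun x => C ω + x) '' Iset d κ) ∧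
    selRisk μ p r (fun ω => (fun x => C ω + x) '' Iset d κ) ⊆
      selRisk μ p r (fun ω => (fun x => C ω + x) '' Hset d 0) := by
  constructor
  · rintro y (⟨x, hx, rfl⟩ | hy)
    · apply subset_closure
      refine Set.mem_iUnion₂.2 ⟨fun ω => C ω + x, ⟨hC.add (memLp_const x),
        Filter.Eventually.of_forall fun ω => Set.mem_image_of_mem _ hx⟩, fun i => ?_⟩
      have : r i (fun ω => C ω i + x i) = r i (fun ω => C ω i) - x i := hcash i _ _
      simp only [Pi.sub_apply]
      exact le_of_eq this
    · refine selRisk_mono μ p r (fun ω => Set.image_mono ?_) hy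
      exact Set.subset_union_right
  · refine selRisk_mono μ p r fun ω => Set.image_mono fun x hx => ?_
    simp only [Iset, Hset, Set.mem_union, Set.mem_setOf_eq] at hx
    simp only [Hset, Set.mem_setOf_eq]
    rcases hx with hx | hx
    · exact Finset.sum_nonpos fun i _ => hx i
    · exact hx.trans (by linarith)
end
end

section
/- Let all d components of r be the same finite convex monetary risk measure ρ on L^p. Then for any p-integrable random vector C and t ∈ R, the selection risk measure of C + H_t equals the half-space −H_{t − dρ(D/d)} = {x ∈ R^d : Σ x_i ≥ dρ(D/d) − t}, where D = C^{(1)} + ... + C^{(d)}. -/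
open MeasureTheory Pointwise Filter
open scoped ENNReal NNReal

noncomputable section

variable {Ω : Type*}

theorem stmt17 [MeasurableSpace Ω] (μ : Measure Ω) [IsProbabilityMeasure μ] (p : ℝ≥0∞)
    {d : ℕ} (hd : 0 < d)
    (ρ : (Ω → ℝ) → ℝ)
    (hconv : ∀ (ξ η : Ω → ℝ) (t : ℝ), 0 ≤ t → t ≤ 1 →
      ρ (fun ω => t * ξ ω + (1 - t) * η ω) ≤ t * ρ ξ + (1 - t) * ρ η)
    (hmono : ∀ (ξ η : Ω → ℝ), (∀ᵐ ω ∂μ, ξ ω ≤ η ω) → ρ η ≤ ρ ξ)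
    (hcash : ∀ (ξ : Ω → ℝ) (c : ℝ), ρ (fun ω => ξ ω + c) = ρ ξ - c)
    (hzero : ρ (fun _ => 0) = 0)
    (C : Ω → Fin d → ℝ) (hC : MemLp C p μ) (t : ℝ) :
    selRisk μ p (fun _ => ρ) (fun ω => (fun x => C ω + x) '' Hset d t) =
      {x : Fin d → ℝ | (d : ℝ) * ρ (fun ω => (∑ i, C ω i) / (d : ℝ)) - t ≤ ∑ i, x i} := by
  classical
  have hdR : (0:ℝ) < d := by exact_mod_cast hd
  have hco : ConvexOn ℝ (Set.univ : Set (Ω → ℝ)) ρ := by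
    refine ⟨convex_univ, fun ξ _ η _ a b ha hb hab => ?_⟩
    have hb1 : b = 1 - a := by linarith
    subst hb1
    have he : (a • ξ + (1 - a) • η) = fun ω => a * ξ ω + (1 - a) * η ω := rfl
    rw [he, smul_eq_mul, smul_eq_mul]
    exact hconv ξ η a ha (by linarith)
  apply Set.Subset.antisymm
  · refine closure_minimal ?_ (isClosed_le continuous_const
      (continuous_finset_sum _ fun i _ => continuous_apply i))
    intro x hx
    simp only [Set.mem_iUnion, Sel, Set.mem_setOf_eq] at hx
    obtain ⟨ξ, ⟨⟨hξp, hξsel⟩, hxi⟩⟩ := hx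
    have hsum : ∀ᵐ ω ∂μ, (∑ i, ξ ω i) / (d:ℝ) ≤ (∑ i, C ω i) / (d:ℝ) + t / (d:ℝ) := by
      filter_upwards [hξsel] with ω hω
      obtain ⟨h, hh, hhe⟩ := hω
      have h1 : ∑ i, ξ ω i = ∑ i, C ω i + ∑ i, h i := by
        rw [← hhe]; simp [Finset.sum_add_distrib]
      rw [h1, ← add_div]
      gcongr
      exact hh
    have hw : ∀ i ∈ (Finset.univ : Finset (Fin d)), (0:ℝ) ≤ (d:ℝ)⁻¹ := fun _ _ => by positivity
    have hw1 : ∑ _i : Fin d, (d:ℝ)⁻¹ = 1 := by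
      simp [Finset.sum_const, Finset.card_univ]
      field_simp
    have hJ := hco.map_sum_le (w := fun _ : Fin d => (d:ℝ)⁻¹)
      (p := fun i => fun ω => ξ ω i) hw hw1 (fun i _ => Set.mem_univ _)
    have heavg : (∑ i : Fin d, (d:ℝ)⁻¹ • fun ω => ξ ω i) = fun ω => (∑ i, ξ ω i) / (d:ℝ) := by
      ext ω
      simp only [Finset.sum_apply, Pi.smul_apply, smul_eq_mul]
      rw [← Finset.mul_sum, inv_mul_eq_div]
    rw [heavg] at hJ
    have hm : ρ (fun ω => (∑ i, C ω i)/(d:ℝ) + t/(d:ℝ)) ≤ ρ (fun ω => (∑ i, ξ ω i)/(d:ℝ)) :=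
      hmono _ _ hsum
    rw [hcash] at hm
    have hs3 : ∑ i, ρ (fun ω => ξ ω i) ≤ ∑ i, x i :=
      Finset.sum_le_sum fun i _ => hxi i
    have hs2 : ρ (fun ω => (∑ i, ξ ω i)/(d:ℝ)) ≤ (d:ℝ)⁻¹ * ∑ i, ρ (fun ω => ξ ω i) := by
      rw [Finset.mul_sum]
      simpa [smul_eq_mul] using hJ
    have key : (d:ℝ) * (ρ (fun ω => (∑ i, C ω i)/(d:ℝ)) - t/(d:ℝ))
        ≤ (d:ℝ) * ((d:ℝ)⁻¹ * ∑ i, ρ (fun ω => ξ ω i)) :=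
      mul_le_mul_of_nonneg_left (le_trans hm hs2) hdR.le
    have e1 : (d:ℝ) * (ρ (fun ω => (∑ i, C ω i)/(d:ℝ)) - t/(d:ℝ))
        = (d:ℝ) * ρ (fun ω => (∑ i, C ω i)/(d:ℝ)) - t := by field_simp
    have e2 : (d:ℝ) * ((d:ℝ)⁻¹ * ∑ i, ρ (fun ω => ξ ω i)) = ∑ i, ρ (fun ω => ξ ω i) := by
      field_simp
    rw [e1, e2] at key
    exact le_trans key hs3
  · intro x hx
    have hsum : (d:ℝ) * ρ (fun ω => (∑ i, C ω i)/(d:ℝ)) - t ≤ ∑ i, x i := hx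
    apply subset_closure
    set r0 : ℝ := ρ (fun ω => (∑ i, C ω i)/(d:ℝ)) with hr0
    refine Set.mem_iUnion₂.mpr ⟨fun ω i => (∑ j, C ω j)/(d:ℝ) + (r0 - x i), ⟨?_, ?_⟩, ?_⟩
    · -- Memℒp
      have h1 : ∀ i : Fin d, MemLp (fun ω => C ω i) p μ := fun i =>
        (ContinuousLinearMap.proj (R := ℝ) (φ := fun _ : Fin d => ℝ) i).comp_memLp' hC
      have h2 : MemLp (fun ω => ∑ i, C ω i) p μ :=
        memLp_finset_sum Finset.univ (fun i _ => h1 i)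
      have h3 : MemLp (fun ω => (∑ i, C ω i)/(d:ℝ)) p μ :=
        (h2.const_mul ((d:ℝ)⁻¹)).ae_eq
          (Filter.EventuallyEq.of_eq (funext fun ω => inv_mul_eq_div _ _))
      have h4 : MemLp (fun ω => (fun _ : Fin d => (∑ i, C ω i)/(d:ℝ))) p μ :=
        (ContinuousLinearMap.pi (fun _ : Fin d => ContinuousLinearMap.id ℝ ℝ)).comp_memLp' h3
      have h5 := h4.add (memLp_const (fun i : Fin d => r0 - x i))
      exact h5.ae_eq (Filter.EventuallyEq.of_eq rfl)
    · -- selection a.e.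
      refine Filter.Eventually.of_forall fun ω => ?_
      refine ⟨(fun i => (∑ j, C ω j)/(d:ℝ) + (r0 - x i)) - C ω, ?_, ?_⟩
      · show ∑ i, ((fun i => (∑ j, C ω j)/(d:ℝ) + (r0 - x i)) - C ω) i ≤ t
        have : ∑ i, ((∑ j, C ω j)/(d:ℝ) + (r0 - x i) - C ω i)
            = (d:ℝ) * r0 - ∑ i, x i := by
          rw [Finset.sum_sub_distrib, Finset.sum_add_distrib, Finset.sum_sub_distrib,
            Finset.sum_const, Finset.card_univ, Fintype.card_fin, nsmul_eq_mul]
          field_simp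
          simp only [Finset.sum_const, Finset.card_univ, Fintype.card_fin, nsmul_eq_mul]
          ring
        simp only [Pi.sub_apply]
        rw [this]
        linarith
      · ext i
        simp
    · intro i
      have := hcash (fun ω => (∑ j, C ω j)/(d:ℝ)) (r0 - x i)
      simp only [← hr0] at this ⊢
      rw [this]
      simp
end
end

section
/- Suppose the first component of r is the negative essential infimum and the remaining d−1 components are identical finite convex monetary risk measures ρ. Then for any essentially appropriate random vector C in R^d, ρ_s(C + H_t) = −H_{t − (d−1)ρ(D/(d−1))}, where D = Σ_{i=1}^d C^{(i)}. -/
open MeasureTheory Pointwise Filter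
open scoped ENNReal NNReal

noncomputable section

variable {Ω : Type*}

lemma jensen_avg {Ω : Type*} (ρ : (Ω → ℝ) → ℝ)
    (hconv : ∀ (ξ η : Ω → ℝ) (t : ℝ), 0 ≤ t → t ≤ 1 →
      ρ (fun ω => t * ξ ω + (1 - t) * η ω) ≤ t * ρ ξ + (1 - t) * ρ η)
    {ι : Type*} (s : Finset ι) (hs : s.Nonempty) (f : ι → Ω → ℝ) :
    ρ (fun ω => (∑ i ∈ s, f i ω) / (s.card : ℝ)) ≤ (∑ i ∈ s, ρ (f i)) / (s.card : ℝ) := by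
  induction hs using Finset.Nonempty.cons_induction with
  | singleton a => simp
  | cons a s ha hs ih =>
      have hn : (0:ℝ) < (s.card : ℝ) := by
        exact_mod_cast hs.card_pos
      set n : ℝ := (s.card : ℝ) with hndef
      have hcard : ((Finset.cons a s ha).card : ℝ) = n + 1 := by
        simp [Finset.card_cons, hndef]
      have ht0 : (0:ℝ) ≤ n / (n + 1) := by positivity
      have ht1 : n / (n + 1) ≤ 1 := by
        rw [div_le_one (by linarith)]; linarith
      have key := hconv (fun ω => (∑ i ∈ s, f i ω) / n) (f a) (n / (n+1)) ht0 ht1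
      have heq : (fun ω => n/(n+1) * ((∑ i ∈ s, f i ω) / n) + (1 - n/(n+1)) * f a ω)
          = fun ω => (∑ i ∈ Finset.cons a s ha, f i ω) / ((Finset.cons a s ha).card : ℝ) := by
        funext ω
        rw [hcard, Finset.sum_cons]
        field_simp
        ring
      rw [heq] at key
      refine key.trans ?_
      rw [hcard, Finset.sum_cons]
      have h2 : n/(n+1) * ((∑ i ∈ s, ρ (f i)) / n) = (∑ i ∈ s, ρ (f i))/(n+1) := by
        field_simp
      calc n/(n+1) * ρ (fun ω => (∑ i ∈ s, f i ω) / n) + (1 - n/(n+1)) * ρ (f a)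
          ≤ n/(n+1) * ((∑ i ∈ s, ρ (f i)) / n) + (1 - n/(n+1)) * ρ (f a) := by
            gcongr
        _ = (ρ (f a) + ∑ i ∈ s, ρ (f i)) / (n + 1) := by
            rw [h2]; field_simp; ring

theorem stmt18 [MeasurableSpace Ω] (μ : Measure Ω) [IsProbabilityMeasure μ]
    {d : ℕ} (hd : 2 ≤ d)
    (ρ : (Ω → ℝ) → ℝ)
    (hconv : ∀ (ξ η : Ω → ℝ) (t : ℝ), 0 ≤ t → t ≤ 1 →
      ρ (fun ω => t * ξ ω + (1 - t) * η ω) ≤ t * ρ ξ + (1 - t) * ρ η)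
    (hmono : ∀ (ξ η : Ω → ℝ), (∀ᵐ ω ∂μ, ξ ω ≤ η ω) → ρ η ≤ ρ ξ)
    (hcash : ∀ (ξ : Ω → ℝ) (c : ℝ), ρ (fun ω => ξ ω + c) = ρ ξ - c)
    (hzero : ρ (fun _ => 0) = 0)
    (r : Fin d → (Ω → ℝ) → ℝ)
    (hr0 : ∀ ξ : Ω → ℝ, r ⟨0, by omega⟩ ξ = -(essInf ξ μ))
    (hri : ∀ i : Fin d, (i : ℕ) ≠ 0 → r i = ρ)
    (C : Ω → Fin d → ℝ) (hC : MemLp C ∞ μ) (t : ℝ) :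
    selRisk μ ∞ r (fun ω => (fun x => C ω + x) '' Hset d t) =
      {x : Fin d → ℝ |
        ((d : ℝ) - 1) * ρ (fun ω => (∑ i, C ω i) / ((d : ℝ) - 1)) - t ≤ ∑ i, x i} := by
  have hd1 : (0:ℝ) < (d:ℝ) - 1 := by
    have : (2:ℝ) ≤ (d:ℝ) := by exact_mod_cast hd
    linarith
  have hd1' : ((d:ℝ) - 1) ≠ 0 := ne_of_gt hd1
  set i0 : Fin d := ⟨0, by omega⟩ with hi0
  set ρb := ρ (fun ω => (∑ i, C ω i) / ((d:ℝ) - 1)) with hρb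
  have hr0' : ∀ ξ : Ω → ℝ, r i0 ξ = -(essInf ξ μ) := hr0
  have hcardE : ((Finset.univ.erase i0).card : ℝ) = (d:ℝ) - 1 := by
    rw [Finset.card_erase_of_mem (Finset.mem_univ _)]
    simp only [Finset.card_univ, Fintype.card_fin]
    rw [Nat.cast_sub (by omega : 1 ≤ d)]
    simp
  have hvalne : ∀ i : Fin d, i ≠ i0 → (i : ℕ) ≠ 0 := by
    intro i h hval
    exact h (Fin.ext hval)
  have heraseNE : (Finset.univ.erase i0).Nonempty := by
    refine ⟨⟨1, by omega⟩, Finset.mem_erase.2 ⟨?_, Finset.mem_univ _⟩⟩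
    intro h
    have := congrArg Fin.val h
    simp [hi0] at this
  apply Set.Subset.antisymm
  · -- ⊆ direction
    refine closure_minimal ?_ ?_
    swap
    · exact isClosed_le continuous_const (continuous_finset_sum _ fun i _ => continuous_apply i)
    rintro x hx
    simp only [Set.mem_iUnion] at hx
    obtain ⟨ξ, ⟨hmem, hae⟩, hxr⟩ := hx
    -- a.e. bound on ξ
    have hlt : eLpNormEssSup ξ μ < ⊤ := by
      have := hmem.2; rwa [eLpNorm_exponent_top] at this
    have hKbound : ∀ᵐ ω ∂μ, ‖ξ ω‖ ≤ (eLpNormEssSup ξ μ).toReal := by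
      filter_upwards [ae_le_eLpNormEssSup (f := ξ) (μ := μ)] with ω hω
      calc ‖ξ ω‖ = ((‖ξ ω‖₊ : ℝ≥0∞)).toReal := by simp
        _ ≤ _ := ENNReal.toReal_mono hlt.ne hω
    have hbdd : IsBoundedUnder (· ≥ ·) (ae μ) (fun ω => ξ ω i0) := by
      refine ⟨-(eLpNormEssSup ξ μ).toReal, ?_⟩
      rw [Filter.eventually_map]
      filter_upwards [hKbound] with ω hω
      have h1 : |ξ ω i0| ≤ ‖ξ ω‖ := by
        simpa using norm_le_pi_norm (ξ ω) i0
      have := abs_le.1 (h1.trans hω)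
      exact this.1
    have hE : ∀ᵐ ω ∂μ, essInf (fun ω => ξ ω i0) μ ≤ ξ ω i0 := ae_essInf_le hbdd
    have hx0 : -(essInf (fun ω => ξ ω i0) μ) ≤ x i0 := by
      have := hxr i0
      rwa [hr0'] at this
    have hsum : ∀ᵐ ω ∂μ, ∑ i, ξ ω i ≤ (∑ i, C ω i) + t := by
      filter_upwards [hae] with ω hω
      obtain ⟨h, hh, heq⟩ := hω
      rw [← heq]
      simp only [Pi.add_apply]
      rw [Finset.sum_add_distrib]
      have : ∑ i, h i ≤ t := hh
      linarith
    -- main chain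
    have h1 : ρ (fun ω => ((∑ j, C ω j) + t + x i0)/((d:ℝ)-1))
        ≤ ρ (fun ω => (∑ i ∈ Finset.univ.erase i0, ξ ω i)/((d:ℝ)-1)) := by
      apply hmono
      filter_upwards [hsum, hE] with ω hs he
      gcongr
      rw [Finset.sum_erase_eq_sub (Finset.mem_univ i0)]
      linarith
    have h2 : ρ (fun ω => ((∑ j, C ω j) + t + x i0)/((d:ℝ)-1))
        = ρb - (t + x i0)/((d:ℝ)-1) := by
      have hfeq : (fun ω => ((∑ j, C ω j) + t + x i0)/((d:ℝ)-1))
          = fun ω => (∑ j, C ω j)/((d:ℝ)-1) + (t + x i0)/((d:ℝ)-1) := by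
        funext ω; ring
      rw [hfeq, hcash]
    have h3 : ρ (fun ω => (∑ i ∈ Finset.univ.erase i0, ξ ω i)/((d:ℝ)-1))
        ≤ (∑ i ∈ Finset.univ.erase i0, ρ (fun ω => ξ ω i))/((d:ℝ)-1) := by
      have := jensen_avg ρ hconv (Finset.univ.erase i0) heraseNE (fun i ω => ξ ω i)
      rwa [hcardE] at this
    have h4 : ∑ i ∈ Finset.univ.erase i0, ρ (fun ω => ξ ω i)
        ≤ ∑ i ∈ Finset.univ.erase i0, x i := by
      refine Finset.sum_le_sum fun i hi => ?_
      have hne := (Finset.mem_erase.1 hi).1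
      rw [← hri i (hvalne i hne)]
      exact hxr i
    have hchain : ρb - (t + x i0)/((d:ℝ)-1) ≤ (∑ i ∈ Finset.univ.erase i0, x i)/((d:ℝ)-1) := by
      rw [← h2]
      refine h1.trans (h3.trans ?_)
      gcongr
    rw [sub_le_iff_le_add, ← add_div, le_div_iff₀ hd1] at hchain
    simp only [Set.mem_setOf_eq]
    rw [← Finset.add_sum_erase _ x (Finset.mem_univ i0)]
    nlinarith [hchain, hd1]
  · -- ⊇ direction
    rintro x hx
    simp only [Set.mem_setOf_eq] at hx
    classical
    set a : Fin d → ℝ := fun i => if i = i0 then -x i0 else ρb - x i with hadef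
    set b : Fin d → ℝ := fun i => if i = i0 then 0 else 1/((d:ℝ)-1) with hbdef
    set ξ : Ω → Fin d → ℝ := fun ω => a + (∑ j, C ω j) • b with hξdef
    have hcoord : ∀ (ω : Ω) (i : Fin d), ξ ω i = a i + (∑ j, C ω j) * b i := fun ω i => rfl
    have hsb : ∑ i, b i = 1 := by
      have hbe : ∀ i ∈ Finset.univ.erase i0, b i = 1/((d:ℝ)-1) := by
        intro i hi
        simp only [hbdef]
        rw [if_neg (Finset.mem_erase.1 hi).1]
      rw [← Finset.add_sum_erase _ b (Finset.mem_univ i0), Finset.sum_congr rfl hbe,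
        Finset.sum_const, nsmul_eq_mul, hcardE]
      simp only [hbdef, if_pos rfl]
      field_simp
      norm_num
    have hsa : ∑ i, a i = -x i0 + (((d:ℝ)-1) * ρb - ∑ i ∈ Finset.univ.erase i0, x i) := by
      have hae2 : ∀ i ∈ Finset.univ.erase i0, a i = ρb - x i := by
        intro i hi
        simp only [hadef]
        rw [if_neg (Finset.mem_erase.1 hi).1]
      rw [← Finset.add_sum_erase _ a (Finset.mem_univ i0), Finset.sum_congr rfl hae2,
        Finset.sum_sub_distrib, Finset.sum_const, nsmul_eq_mul, hcardE]
      simp [hadef]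
    -- Memℒp
    have hDmem : MemLp (fun ω => ∑ j, C ω j) ∞ μ := by
      refine memLp_finset_sum Finset.univ (fun j _ => ?_)
      exact (ContinuousLinearMap.proj j : (Fin d → ℝ) →L[ℝ] ℝ).comp_memLp' hC
    have hξmem : MemLp ξ ∞ μ :=
      (memLp_const a).add ((memLp_const b : MemLp (fun _ => b) ∞ μ).smul hDmem)
    -- selection property
    have hsel : ∀ ω, ξ ω ∈ (fun y => C ω + y) '' Hset d t := by
      intro ω
      refine ⟨ξ ω - C ω, ?_, add_sub_cancel _ _⟩
      show ∑ i, (ξ ω - C ω) i ≤ t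
      simp only [Pi.sub_apply]
      rw [Finset.sum_sub_distrib]
      have : ∑ i, ξ ω i = ∑ i, a i + (∑ j, C ω j) * 1 := by
        simp only [hcoord]
        rw [Finset.sum_add_distrib, ← Finset.mul_sum, hsb]
      rw [this, hsa]
      have hxs : ∑ i, x i = x i0 + ∑ i ∈ Finset.univ.erase i0, x i := by
        rw [Finset.add_sum_erase _ x (Finset.mem_univ i0)]
      rw [hxs] at hx
      linarith
    -- r conditions
    have hrcond : ∀ i, r i (fun ω => ξ ω i) ≤ x i := by
      intro i
      by_cases hi : i = i0
      · have hfc : (fun ω => ξ ω i) = fun _ => -x i0 := by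
          funext ω
          rw [hcoord, hi]
          simp [hadef, hbdef]
        rw [hfc, hi, hr0', essInf_const' (-x i0)]
        simp
      · rw [hri i (hvalne i hi)]
        have hfc : (fun ω => ξ ω i) = fun ω => (∑ j, C ω j)/((d:ℝ)-1) + (ρb - x i) := by
          funext ω
          rw [hcoord]
          simp only [hadef, hbdef, if_neg hi]
          ring
        rw [hfc, hcash, ← hρb]
        simp
    exact subset_closure (Set.mem_iUnion₂.2 ⟨ξ, ⟨hξmem, .of_forall hsel⟩, hrcond⟩)
end
end
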